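/- The projective line over Z_4 × Z_4 has exactly 8 points of type II, i.e., points all of whose representatives have both coordinates zero-divisors. -/

import Mathlib

def Admissible {R : Type*} [CommRing R] (p : R × R) : Prop :=
  ∃ M : Matrix (Fin 2) (Fin 2) R, IsUnit M ∧ M 0 0 = p.1 ∧ M 0 1 = p.2

def PairRel {R : Type*} [CommRing R] (p q : {p : R × R // Admissible p}) : Prop :=
  ∃ u : Rˣ, q.1 = ((u : R) * p.1.1, (u : R) * p.1.2)

/-- The projective line over `R`: unit-orbit classes of admissible pairs. -/
def PL (R : Type*) [CommRing R] : Type _ := Quot (@PairRel R _)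

def PL.mk {R : Type*} [CommRing R] (p : R × R) (h : Admissible p) : PL R :=
  Quot.mk _ ⟨p, h⟩

/-- `x` is a zero-divisor (counting `0` as a zero-divisor). -/
def IsZD {R : Type*} [CommRing R] (x : R) : Prop :=
  x = 0 ∨ ∃ y : R, y ≠ 0 ∧ x * y = 0

/-- A point is of type I if some representative has a unit entry. -/
def TypeI {R : Type*} [CommRing R] (X : PL R) : Prop :=
  ∃ p h, PL.mk p h = X ∧ (IsUnit p.1 ∨ IsUnit p.2)

/-- A point is of type II if every representative has both coordinates zero-divisors. -/
def TypeII {R : Type*} [CommRing R] (X : PL R) : Prop :=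
  ∀ p h, PL.mk p h = X → IsZD p.1 ∧ IsZD p.2

/-- Neighbour relation: the determinant of representatives is a non-unit. -/
def Nbr {R : Type*} [CommRing R] (X Y : PL R) : Prop :=
  ∃ p q hp hq, X = PL.mk p hp ∧ Y = PL.mk q hq ∧ ¬ IsUnit (p.1 * q.2 - p.2 * q.1)

/-- Neighbour relation phrased via zero-divisors. -/
def NbrZD {R : Type*} [CommRing R] (X Y : PL R) : Prop :=
  ∃ p q hp hq, X = PL.mk p hp ∧ Y = PL.mk q hq ∧ IsZD (p.1 * q.2 - p.2 * q.1)

/-- Distant relation: the determinant of representatives is a unit. -/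
def Distant {R : Type*} [CommRing R] (X Y : PL R) : Prop :=
  ∃ p q hp hq, X = PL.mk p hp ∧ Y = PL.mk q hq ∧ IsUnit (p.1 * q.2 - p.2 * q.1)

lemma adm {R : Type*} [CommRing R] (a b c d : R) (h : IsUnit (a * d - b * c)) :
    Admissible (a, b) :=
  ⟨!![a, b; c, d], (Matrix.isUnit_iff_isUnit_det _).2
    (by simpa [Matrix.det_fin_two_of] using h), rfl, rfl⟩

def ptU (R : Type*) [CommRing R] : PL R :=
  PL.mk (1, 0) (adm 1 0 0 1 (by simpa using isUnit_one))

def ptV (R : Type*) [CommRing R] : PL R :=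
  PL.mk (0, 1) (adm 0 1 1 0 (by simpa using (isUnit_one (M := R)).neg))

def ptW (R : Type*) [CommRing R] : PL R :=
  PL.mk (1, 1) (adm 1 1 0 1 (by simpa using isUnit_one))

abbrev R4 : Type := ZMod 4 × ZMod 4

section Aux

lemma unitVal4 : ∀ v w : R4, v * w = 1 →
    v = ((1,1) : R4) ∨ v = (1,3) ∨ v = (3,1) ∨ v = (3,3) := by decide

lemma exists_cd : ∀ a b : ZMod 4, (a = 1 ∨ a = 3 ∨ b = 1 ∨ b = 3) →
    ∃ c d : ZMod 4, a * d - b * c = 1 := by decide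

lemma det_comp : ∀ a b c d : ZMod 4, (a * d - b * c = 1 ∨ a * d - b * c = 3) →
    (a = 1 ∨ a = 3 ∨ b = 1 ∨ b = 3) := by decide

lemma mul_one_mem4 : ∀ y z : ZMod 4, y * z = 1 → (y = 1 ∨ y = 3) := by decide

lemma unit4 : ∀ x : ZMod 4, IsUnit x ↔ (x = 1 ∨ x = 3) := by
  intro x
  constructor
  · rintro ⟨u, rfl⟩
    exact mul_one_mem4 _ _ (by rw [← Units.val_mul, mul_inv_cancel, Units.val_one] :
      (u : ZMod 4) * ((u⁻¹ : (ZMod 4)ˣ) : ZMod 4) = 1)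
  · rintro (rfl | rfl)
    · exact isUnit_one
    · exact IsUnit.of_mul_eq_one (a := 3) 3 (by decide)

lemma admissible_iff (p : R4 × R4) : Admissible p ↔
    ((p.1.1 = 1 ∨ p.1.1 = 3 ∨ p.2.1 = 1 ∨ p.2.1 = 3) ∧
     (p.1.2 = 1 ∨ p.1.2 = 3 ∨ p.2.2 = 1 ∨ p.2.2 = 3)) := by
  constructor
  · rintro ⟨M, hM, h1, h2⟩
    have hdet := (Matrix.isUnit_iff_isUnit_det _).1 hM
    rw [Matrix.det_fin_two, h1, h2] at hdet
    obtain ⟨u, hu⟩ := hdet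
    have h : (p.1 * M 1 1 - p.2 * M 1 0) * ((u⁻¹ : (R4)ˣ) : R4) = 1 := by
      rw [← hu, ← Units.val_mul, mul_inv_cancel, Units.val_one]
    have h1' := congrArg Prod.fst h
    have h2' := congrArg Prod.snd h
    simp only [Prod.fst_mul, Prod.snd_mul, Prod.fst_sub, Prod.snd_sub,
      Prod.fst_one, Prod.snd_one] at h1' h2'
    constructor
    · exact det_comp _ _ _ _ ((unit4 _).1 (IsUnit.of_mul_eq_one _ h1'))
    · exact det_comp _ _ _ _ ((unit4 _).1 (IsUnit.of_mul_eq_one _ h2'))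
  · rintro ⟨H1, H2⟩
    obtain ⟨c1, d1, hcd1⟩ := exists_cd _ _ H1
    obtain ⟨c2, d2, hcd2⟩ := exists_cd _ _ H2
    have := adm p.1 p.2 (c1, c2) (d1, d2) ?_
    · simpa using this
    · have : p.1 * (d1, d2) - p.2 * (c1, c2) = (1 : R4) := by
        ext
        · simpa using hcd1
        · simpa using hcd2
      rw [this]; exact isUnit_one

instance : DecidablePred (Admissible (R := R4)) := fun p =>
  decidable_of_iff _ (admissible_iff p).symm

instance sA : Setoid {p : R4 × R4 // Admissible p} where
  r := PairRel
  iseqv := by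
    constructor
    · intro p; exact ⟨1, by simp⟩
    · rintro p q ⟨u, hu⟩
      refine ⟨u⁻¹, ?_⟩
      rw [hu]
      ext <;> simp
    · rintro p q r ⟨u, hu⟩ ⟨v, hv⟩
      refine ⟨v * u, ?_⟩
      rw [hv, hu]
      ext <;> simp [mul_assoc]

lemma pairRel_iff (p q : {p : R4 × R4 // Admissible p}) : PairRel p q ↔
    (q.1 = (((1,1):R4) * p.1.1, ((1,1):R4) * p.1.2) ∨
     q.1 = (((1,3):R4) * p.1.1, ((1,3):R4) * p.1.2) ∨
     q.1 = (((3,1):R4) * p.1.1, ((3,1):R4) * p.1.2) ∨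
     q.1 = (((3,3):R4) * p.1.1, ((3,3):R4) * p.1.2)) := by
  constructor
  · rintro ⟨u, hu⟩
    have h : (u : R4) * ((u⁻¹ : (R4)ˣ) : R4) = 1 := by
      rw [← Units.val_mul, mul_inv_cancel, Units.val_one]
    rcases unitVal4 _ _ h with h' | h' | h' | h' <;> rw [h'] at hu
    · exact Or.inl hu
    · exact Or.inr (Or.inl hu)
    · exact Or.inr (Or.inr (Or.inl hu))
    · exact Or.inr (Or.inr (Or.inr hu))
  · have mk : ∀ v : R4, v * v = 1 →
        q.1 = (v * p.1.1, v * p.1.2) → PairRel p q := by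
      intro v hv hq
      exact ⟨(IsUnit.of_mul_eq_one (a := v) v hv).unit, by
        rwa [IsUnit.unit_spec]⟩
    rintro (h | h | h | h)
    · exact mk _ (by decide) h
    · exact mk _ (by decide) h
    · exact mk _ (by decide) h
    · exact mk _ (by decide) h

instance : ∀ p q : {p : R4 × R4 // Admissible p}, Decidable (p ≈ q) := fun p q =>
  decidable_of_iff _ (pairRel_iff p q).symm

instance : DecidableEq (PL R4) :=
  inferInstanceAs (DecidableEq (Quotient sA))

instance : Fintype (PL R4) :=
  inferInstanceAs (Fintype (Quotient sA))

lemma isZD_iff : ∀ x : R4, IsZD x ↔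
    ((x.1 = 0 ∨ x.1 = 2) ∨ (x.2 = 0 ∨ x.2 = 2)) := by
  have : ∀ x : R4, (x = 0 ∨ ∃ y : R4, y ≠ 0 ∧ x * y = 0) ↔
      ((x.1 = 0 ∨ x.1 = 2) ∨ (x.2 = 0 ∨ x.2 = 2)) := by decide
  exact this

instance : DecidablePred (IsZD (R := R4)) := fun x =>
  decidable_of_iff _ (isZD_iff x).symm

lemma typeII_mk_iff (y : {p : R4 × R4 // Admissible p}) :
    TypeII (Quot.mk PairRel y) ↔ (IsZD y.1.1 ∧ IsZD y.1.2) := by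
  constructor
  · intro H
    exact H y.1 y.2 rfl
  · rintro ⟨h1, h2⟩ p h hp
    have hrel : PairRel (⟨p, h⟩ : {p : R4 × R4 // Admissible p}) y :=
      Quotient.exact (s := sA) hp
    obtain ⟨u, hu⟩ := hrel
    have hy1 : y.1.1 = (u : R4) * p.1 := by rw [hu]
    have hy2 : y.1.2 = (u : R4) * p.2 := by rw [hu]
    have key : ∀ (x : R4), IsZD ((u : R4) * x) → IsZD x := by
      intro x hx
      rcases hx with h0 | ⟨z, hz, hxz⟩
      · left
        have : ((u⁻¹ : R4ˣ) : R4) * ((u : R4) * x) = x := by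
          rw [← mul_assoc, ← Units.val_mul, inv_mul_cancel, Units.val_one, one_mul]
        rw [← this, h0, mul_zero]
      · right
        refine ⟨z, hz, ?_⟩
        have : ((u⁻¹ : R4ˣ) : R4) * ((u : R4) * x * z) = x * z := by
          rw [← mul_assoc, ← mul_assoc, ← Units.val_mul, inv_mul_cancel,
            Units.val_one, one_mul]
        rw [← this, hxz, mul_zero]
    exact ⟨key _ (hy1 ▸ h1), key _ (hy2 ▸ h2)⟩

instance : DecidablePred (TypeII (R := R4)) := fun X =>
  Quot.recOnSubsingleton (motive := fun X => Decidable (TypeII X)) X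
    (fun y => decidable_of_iff _ (typeII_mk_iff y).symm)

end Aux

set_option maxHeartbeats 4000000 in
set_option maxRecDepth 20000 in
theorem stmt7 : Nat.card {X : PL R4 // TypeII X} = 8 := by
  rw [Nat.card_eq_fintype_card]
  decide
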